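/- Let f : ℤ_N × ℤ_T → ℂ be nonzero and let f̂ denote its two-dimensional discrete Fourier transform, f̂(m,n) = (NT)^{-1/2} Σ_{x∈ℤ_N} Σ_{y∈ℤ_T} f(x,y) exp(-2πi(xm/N + yn/T)). Then |supp(f)| · |supp(f̂)| ≥ NT. -/

import Mathlib

open scoped BigOperators Classical
open Finset
noncomputable section

/-- Two-dimensional discrete Fourier transform on ℤ_N × ℤ_T with unitary normalization. -/
def dft2 (N T : ℕ) [NeZero N] [NeZero T] (f : ZMod N × ZMod T → ℂ) : ZMod N × ZMod T → ℂ :=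
  fun p => ((1 / Real.sqrt (N * T) : ℝ) : ℂ) *
    ∑ x : ZMod N, ∑ y : ZMod T, f (x, y) *
      Complex.exp (-2 * Real.pi * Complex.I *
        (((x.val * p.1.val : ℕ) : ℂ) / (N : ℂ) + ((y.val * p.2.val : ℕ) : ℂ) / (T : ℂ)))

lemma char_eq (N : ℕ) [NeZero N] (x m : ZMod N) :
    Complex.exp (-2 * Real.pi * Complex.I * (((x.val * m.val : ℕ) : ℂ) / N)) =
      ZMod.stdAddChar (-(x * m)) := by
  have h : (-(x * m) : ZMod N) = ((-(x.val * m.val : ℤ) : ℤ) : ZMod N) := by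
    push_cast
    simp [ZMod.natCast_val, ZMod.cast_id']
  rw [h, ZMod.stdAddChar_coe]
  congr 1
  push_cast
  ring

lemma sum_char (N : ℕ) [NeZero N] (t : ZMod N) :
    ∑ m : ZMod N, ZMod.stdAddChar (t * m) = if t = 0 then (N : ℂ) else 0 := by
  split_ifs with h
  · simp [h, AddChar.map_zero_eq_one, Finset.card_univ]
  · exact AddChar.sum_eq_zero_of_ne_one (ZMod.isPrimitive_stdAddChar N h)

def gdft (N T : ℕ) [NeZero N] [NeZero T] (f : ZMod N × ZMod T → ℂ) :
    ZMod N × ZMod T → ℂ :=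
  fun q => ∑ p : ZMod N × ZMod T,
    f p * ZMod.stdAddChar (-(p.1 * q.1)) * ZMod.stdAddChar (-(p.2 * q.2))

lemma dft2_eq_gdft (N T : ℕ) [NeZero N] [NeZero T] (f : ZMod N × ZMod T → ℂ)
    (q : ZMod N × ZMod T) :
    dft2 N T f q = ((1 / Real.sqrt (N * T) : ℝ) : ℂ) * gdft N T f q := by
  rw [dft2, gdft, Fintype.sum_prod_type]
  congr 1
  refine Finset.sum_congr rfl fun x _ => Finset.sum_congr rfl fun y _ => ?_
  rw [← char_eq, ← char_eq, mul_assoc (f (x, y)), ← Complex.exp_add]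
  congr 2
  ring

lemma gdft_inversion (N T : ℕ) [NeZero N] [NeZero T] (f : ZMod N × ZMod T → ℂ)
    (a : ZMod N) (b : ZMod T) :
    ∑ q : ZMod N × ZMod T,
        gdft N T f q * ZMod.stdAddChar (a * q.1) * ZMod.stdAddChar (b * q.2)
      = (N : ℂ) * (T : ℂ) * f (a, b) := by
  have comb : ∀ {M : ℕ} [NeZero M] (u v w : ZMod M),
      ZMod.stdAddChar (-(u * w)) * ZMod.stdAddChar (v * w)
        = ZMod.stdAddChar ((v - u) * w) := by
    intro M _ u v w
    rw [← AddChar.map_add_eq_mul]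
    congr 1
    ring
  calc ∑ q : ZMod N × ZMod T,
        gdft N T f q * ZMod.stdAddChar (a * q.1) * ZMod.stdAddChar (b * q.2)
      = ∑ p : ZMod N × ZMod T, f p *
          ((∑ m : ZMod N, ZMod.stdAddChar ((a - p.1) * m)) *
           (∑ n : ZMod T, ZMod.stdAddChar ((b - p.2) * n))) := by
        simp only [gdft, Finset.sum_mul]
        rw [Finset.sum_comm]
        refine Finset.sum_congr rfl fun p _ => ?_
        rw [Fintype.sum_prod_type]
        simp only [Finset.mul_sum, Finset.sum_mul]
        refine Finset.sum_congr rfl fun m _ => ?_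
        refine Finset.sum_congr rfl fun n _ => ?_
        rw [← comb p.1 a m, ← comb p.2 b n]
        ring
    _ = ∑ p : ZMod N × ZMod T,
          (if p = (a, b) then (N : ℂ) * (T : ℂ) * f p else 0) := by
        refine Finset.sum_congr rfl fun p _ => ?_
        rw [sum_char, sum_char]
        by_cases h : p = (a, b)
        · subst h; simp [mul_comm]
        · rw [Prod.ext_iff] at h
          push_neg at h
          by_cases h1 : p.1 = a
          · have h2 : p.2 ≠ b := h h1
            simp [sub_eq_zero, Ne.symm h2, if_neg, Prod.ext_iff, h2]
          · simp [sub_eq_zero, Ne.symm h1, Prod.ext_iff, h1]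
    _ = (N : ℂ) * (T : ℂ) * f (a, b) := by
        rw [Finset.sum_ite_eq' Finset.univ (a, b)]
        simp

lemma abs_stdAddChar (N : ℕ) [NeZero N] (j : ZMod N) :
    ‖(ZMod.stdAddChar j : ℂ)‖ = 1 := by
  simp [ZMod.stdAddChar_apply, Circle.norm_coe]


/-- Two-dimensional discrete uncertainty principle:
`|supp f| * |supp f̂| ≥ N * T` for nonzero `f : ℤ_N × ℤ_T → ℂ`. -/
theorem two_dim_uncertainty (N T : ℕ) [NeZero N] [NeZero T]
    (f : ZMod N × ZMod T → ℂ) (hf : f ≠ 0) :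
    N * T ≤
      (Finset.univ.filter fun p : ZMod N × ZMod T => f p ≠ 0).card *
      (Finset.univ.filter fun p : ZMod N × ZMod T => dft2 N T f p ≠ 0).card := by
  classical
  set S := (Finset.univ.filter fun p : ZMod N × ZMod T => f p ≠ 0) with hS
  set B := (Finset.univ.filter fun p : ZMod N × ZMod T => dft2 N T f p ≠ 0) with hB
  -- pick a point where |f| is maximal
  obtain ⟨p0, hp0⟩ : ∃ p0, f p0 ≠ 0 := by
    by_contra h
    push_neg at h
    exact hf (funext fun p => h p)
  obtain ⟨pm, -, hpm⟩ := Finset.exists_max_image Finset.univ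
    (fun p => ‖f p‖) ⟨p0, Finset.mem_univ p0⟩
  set M := ‖f pm‖ with hM
  have hMpos : 0 < M := lt_of_lt_of_le (norm_pos_iff.mpr hp0) (hpm p0 (Finset.mem_univ p0))
  -- B equals the support of gdft
  have hBg : B = Finset.univ.filter fun p : ZMod N × ZMod T => gdft N T f p ≠ 0 := by
    have hc : ((1 / Real.sqrt (N * T) : ℝ) : ℂ) ≠ 0 := by
      have : (0 : ℝ) < Real.sqrt (N * T) := Real.sqrt_pos.2 (mul_pos (by exact_mod_cast Nat.pos_of_ne_zero (NeZero.ne N))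
          (by exact_mod_cast Nat.pos_of_ne_zero (NeZero.ne T)))
      simp [this.ne', NeZero.ne N, NeZero.ne T]
    refine Finset.filter_congr fun p _ => ?_
    rw [dft2_eq_gdft]
    constructor
    · intro h hg; exact h (by rw [hg, mul_zero])
    · intro h hg; exact h (by
        rcases mul_eq_zero.1 hg with h' | h'
        · exact absurd h' hc
        · exact h')
  -- pointwise bound on the unnormalized transform
  have hgb : ∀ q, ‖gdft N T f q‖ ≤ S.card * M := by
    intro q
    have h1 : ‖gdft N T f q‖ ≤
        ∑ p : ZMod N × ZMod T, ‖f p‖ := by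
      refine le_trans (norm_sum_le _ _) (le_of_eq ?_)
      refine Finset.sum_congr rfl fun p _ => ?_
      simp [map_mul, norm_mul, abs_stdAddChar]
    have h2 : ∑ p : ZMod N × ZMod T, ‖f p‖
        = ∑ p ∈ S, ‖f p‖ := by
      refine (Finset.sum_subset (hS ▸ Finset.filter_subset _ _) fun p _ hp => ?_).symm
      rw [hS, Finset.mem_filter] at hp
      have : f p = 0 := by
        by_contra h
        exact hp ⟨Finset.mem_univ p, h⟩
      simp [this]
    have h3 : ∑ p ∈ S, ‖f p‖ ≤ S.card * M := by
      have := Finset.sum_le_card_nsmul S (fun p => ‖f p‖) M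
        (fun p _ => hpm p (Finset.mem_univ p))
      simpa [nsmul_eq_mul] using this
    exact h1.trans (h2 ▸ h3)
  -- main inequality
  have key : (N : ℝ) * T * M ≤ B.card * (S.card * M) := by
    have h1 : (N : ℝ) * T * M = ‖(N : ℂ) * (T : ℂ) * f (pm.1, pm.2)‖ := by
      simp [map_mul, norm_mul, hM]
    rw [h1, ← gdft_inversion N T f pm.1 pm.2]
    have h2 : ‖∑ q : ZMod N × ZMod T,
          gdft N T f q * ZMod.stdAddChar (pm.1 * q.1) * ZMod.stdAddChar (pm.2 * q.2)‖
        ≤ ∑ q : ZMod N × ZMod T, ‖gdft N T f q‖ := by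
      refine le_trans (norm_sum_le _ _) (le_of_eq ?_)
      refine Finset.sum_congr rfl fun q _ => ?_
      simp [map_mul, norm_mul, abs_stdAddChar]
    have h3 : ∑ q : ZMod N × ZMod T, ‖gdft N T f q‖
        = ∑ q ∈ B, ‖gdft N T f q‖ := by
      refine (Finset.sum_subset (Finset.filter_subset _ _) fun q _ hq => ?_).symm
      rw [← hB, hBg, Finset.mem_filter] at hq
      have : gdft N T f q = 0 := by
        by_contra h
        exact hq ⟨Finset.mem_univ q, h⟩
      simp [this]
    have h4 : ∑ q ∈ B, ‖gdft N T f q‖ ≤ B.card * (S.card * M) := by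
      have := Finset.sum_le_card_nsmul B (fun q => ‖gdft N T f q‖)
        (S.card * M) (fun q _ => hgb q)
      simpa [nsmul_eq_mul] using this
    exact h2.trans (h3 ▸ h4)
  have key2 : (N : ℝ) * T ≤ (S.card : ℝ) * B.card := by
    have := le_of_mul_le_mul_right (by
      calc (N : ℝ) * T * M ≤ B.card * (S.card * M) := key
        _ = (S.card : ℝ) * B.card * M := by ring) hMpos
    exact this
  exact_mod_cast key2
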